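/- Let N be a semidirected acyclic L-network (not necessarily binary) and T a root component of N with nonempty set of admissible edges adm(T). For an edge e = uv in adm(T) with u in T, the vector whose i-th coordinate is m(v,i;e) + m(u,i;e) (number of semidirected paths from v, respectively u, to leaf i that avoid e), for i ranging over all leaf labels, does not depend on the choice of e in adm(T). -/

import Mathlib

open scoped Classical

noncomputable section

/-! ## Tags, μ-vectors, cherry types -/

inductive Tag : Type
  | te | hy | rn | ie
deriving DecidableEq, Inhabited

/-- The four cherry types (r2), (r3), (d), (u). -/
inductive CT : Type
  | r2 | r3 | d | u
deriving DecidableEq, Inhabited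

/-- The eight cherry kinds: tree/reticulate combined with the four types. -/
inductive CherryKind : Type
  | Tr2 | Tr3 | Td | Tu | Rr2 | Rr3 | Rd | Ru
deriving DecidableEq, Inhabited

def CherryKind.isTree : CherryKind → Bool
  | .Tr2 | .Tr3 | .Td | .Tu => true
  | _ => false

def CherryKind.ct : CherryKind → CT
  | .Tr2 => .r2 | .Tr3 => .r3 | .Td => .d | .Tu => .u
  | .Rr2 => .r2 | .Rr3 => .r3 | .Rd => .d | .Ru => .u

/-- A simple μ-vector on `n` taxa: coordinate 0 counts paths to hybrid nodes,
coordinate `i.succ` counts paths to the leaf labelled `i`. -/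
abbrev MuVec (n : ℕ) := Fin (n + 1) → ℕ

/-- A μ-entry: a multiset of (one or two) tagged simple μ-vectors. -/
abbrev MuEntry (n : ℕ) := Multiset (MuVec n × Tag)

/-- An edge-based μ-representation: a multiset of μ-entries. -/
abbrev MuRep (n : ℕ) := Multiset (MuEntry n)

/-- Indicator μ-vector `δ_S`. -/
def dlt {n : ℕ} (s : Finset (Fin (n + 1))) : MuVec n := fun i => if i ∈ s then 1 else 0

/-! ## Semidirected multigraphs with labelled leaves -/

/-- A semidirected multigraph on vertex names `ℕ` and edge names `ℕ`;
`dir e = true` means `e` is directed from `tail e` to `head e`;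
`dir e = false` means `e` is an undirected edge with endpoints `tail e`, `head e`.
Leaves may be labelled by taxa in `Fin n`. -/
structure Net (n : ℕ) where
  V : Finset ℕ
  E : Finset ℕ
  tail : ℕ → ℕ
  head : ℕ → ℕ
  dir : ℕ → Bool
  lbl : ℕ → Option (Fin n)

namespace Net

variable {n : ℕ}

def indeg (N : Net n) (v : ℕ) : ℕ :=
  (N.E.filter (fun e => N.dir e = true ∧ N.head e = v)).card
def outdeg (N : Net n) (v : ℕ) : ℕ :=
  (N.E.filter (fun e => N.dir e = true ∧ N.tail e = v)).card
def undeg (N : Net n) (v : ℕ) : ℕ :=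
  (N.E.filter (fun e => N.dir e = false ∧ (N.tail e = v ∨ N.head e = v))).card
def deg (N : Net n) (v : ℕ) : ℕ := N.indeg v + N.outdeg v + N.undeg v

def IsRootNode (N : Net n) (v : ℕ) : Prop := v ∈ N.V ∧ N.indeg v = 0 ∧ N.undeg v = 0
def IsLeafNode (N : Net n) (v : ℕ) : Prop := v ∈ N.V ∧ N.outdeg v = 0 ∧ N.undeg v = 0
def IsHybrid (N : Net n) (v : ℕ) : Prop := 2 ≤ N.indeg v
def IsTreeNode (N : Net n) (v : ℕ) : Prop := N.indeg v ≤ 1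

/-- Source of a step `(e, forward?)` of a semidirected walk. -/
def src (N : Net n) (s : ℕ × Bool) : ℕ := if s.2 then N.tail s.1 else N.head s.1
/-- Destination of a step. -/
def dst (N : Net n) (s : ℕ × Bool) : ℕ := if s.2 then N.head s.1 else N.tail s.1

/-- A step is legal from `u`: the edge is in the graph, directed edges are
traversed forwards, and the step starts at `u`. -/
def stepOK (N : Net n) (u : ℕ) (s : ℕ × Bool) : Prop :=
  s.1 ∈ N.E ∧ (N.dir s.1 = true → s.2 = true) ∧ N.src s = u

/-- `chain N u p x`: `p` is a semidirected walk from `u` to `x`. -/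
def chain (N : Net n) : ℕ → List (ℕ × Bool) → ℕ → Prop
  | u, [], x => u = x
  | u, s :: p, x => N.stepOK u s ∧ N.chain (N.dst s) p x

/-- A semidirected path (walk without repeated vertices) from `u` to `x`. -/
def IsPath (N : Net n) (u x : ℕ) (p : List (ℕ × Bool)) : Prop :=
  u ∈ N.V ∧ N.chain u p x ∧ (u :: p.map N.dst).Nodup

def paths (N : Net n) (u x : ℕ) : Set (List (ℕ × Bool)) := {p | N.IsPath u x p}
def pathsAvoid (N : Net n) (u x : ℕ) (e : ℕ) : Set (List (ℕ × Bool)) :=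
  {p | N.IsPath u x p ∧ e ∉ p.map Prod.fst}

/-- `m N u x` : the number of semidirected paths from `u` to `x`. -/
def m (N : Net n) (u x : ℕ) : ℕ := (N.paths u x).ncard
/-- `mAvoid N u x e` : the number of semidirected paths from `u` to `x` avoiding `e`. -/
def mAvoid (N : Net n) (u x : ℕ) (e : ℕ) : ℕ := (N.pathsAvoid u x e).ncard

/-- One undirected edge joins `u` and `v`. -/
def ustep (N : Net n) (u v : ℕ) : Prop :=
  ∃ e ∈ N.E, N.dir e = false ∧
    ((N.tail e = u ∧ N.head e = v) ∨ (N.tail e = v ∧ N.head e = u))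

/-- `u ~ v`: joined by a path consisting solely of undirected edges. -/
def UndirConn (N : Net n) : ℕ → ℕ → Prop := Relation.ReflTransGen N.ustep

/-- A semidirected cycle. -/
def IsSDCycle (N : Net n) (p : List (ℕ × Bool)) : Prop :=
  ∃ u, p ≠ [] ∧ N.chain u p u ∧ (p.map N.dst).Nodup ∧ (p.map Prod.fst).Nodup

def Acyclic (N : Net n) : Prop := ∀ p, ¬ N.IsSDCycle p

/-- `x` is the leaf labelled `a`. -/
def HasLeaf (N : Net n) (a : Fin n) (x : ℕ) : Prop := x ∈ N.V ∧ N.lbl x = some a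

/-- `N` is an `L`-network: a semidirected acyclic graph whose leaves are tree
nodes, with leaves injectively labelled. -/
structure IsLNetwork (N : Net n) : Prop where
  wfT : ∀ e ∈ N.E, N.tail e ∈ N.V
  wfH : ∀ e ∈ N.E, N.head e ∈ N.V
  acyclic : N.Acyclic
  leavesTree : ∀ v, N.IsLeafNode v → N.IsTreeNode v
  lblV : ∀ v, v ∉ N.V → N.lbl v = none
  lblLeaf : ∀ v ∈ N.V, ((N.lbl v).isSome ↔ N.IsLeafNode v)
  lblInj : ∀ v ∈ N.V, ∀ w ∈ N.V, N.lbl v ≠ none → N.lbl v = N.lbl w → v = w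

/-- Binary: roots of degree 0, 2 or 3; leaves of degree 0 or 1; other nodes of degree 3. -/
def IsBinary (N : Net n) : Prop :=
  ∀ v ∈ N.V,
    (N.IsRootNode v → N.deg v = 0 ∨ N.deg v = 2 ∨ N.deg v = 3) ∧
    (N.IsLeafNode v → N.deg v = 0 ∨ N.deg v = 1) ∧
    (¬ N.IsRootNode v → ¬ N.IsLeafNode v → N.deg v = 3)

/-- The class of `v` under `~` is a singleton. -/
def TrivialClass (N : Net n) (v : ℕ) : Prop := ∀ w, N.UndirConn v w → w = v

/-- Complete: edges incident to leaves are directed (toward the leaves), and every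
nontrivial class under `~` has in-degree 0 in the contraction `N/~`. -/
def IsComplete (N : Net n) : Prop :=
  (∀ e ∈ N.E, N.dir e = false → ¬ N.IsLeafNode (N.tail e) ∧ ¬ N.IsLeafNode (N.head e)) ∧
  (∀ v ∈ N.V, ¬ N.TrivialClass v → ∀ e ∈ N.E, N.dir e = true → ¬ N.UndirConn (N.head e) v)

/-- The class `[v]` is a root of the contraction `N/~`: no directed edge points into it. -/
def IsRootClass (N : Net n) (v : ℕ) : Prop :=
  v ∈ N.V ∧ ∀ e ∈ N.E, N.dir e = true → ¬ N.UndirConn (N.head e) v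

/-- `v` belongs to an unresolved root component. -/
def UnresolvedRC (N : Net n) (v : ℕ) : Prop :=
  N.IsRootClass v ∧ (¬ N.TrivialClass v ∨ N.deg v = 3)

/-- `e` belongs to the admissible edge set of the root component of `v0`. -/
def AdmFor (N : Net n) (v0 e : ℕ) : Prop := e ∈ N.E ∧ N.UndirConn (N.tail e) v0

/-! ## μ-representation of a network -/

def Hybs (N : Net n) : Finset ℕ := N.V.filter (fun v => N.IsHybrid v)

def mToLbl (N : Net n) (v : ℕ) (a : Fin n) : ℕ :=
  ∑ x ∈ N.V.filter (fun x => N.lbl x = some a), N.m v x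
def mToLblAvoid (N : Net n) (v : ℕ) (a : Fin n) (e : ℕ) : ℕ :=
  ∑ x ∈ N.V.filter (fun x => N.lbl x = some a), N.mAvoid v x e

/-- Numbers of paths from `v` to hybrids (coordinate 0) and to each leaf. -/
def muFrom (N : Net n) (v : ℕ) : MuVec n :=
  fun i => Fin.cases (∑ h ∈ N.Hybs, N.m v h) (fun a => N.mToLbl v a) i

/-- Numbers of paths from `v` avoiding edge `e`. -/
def muAt (N : Net n) (e : ℕ) (v : ℕ) : MuVec n :=
  fun i => Fin.cases (∑ h ∈ N.Hybs, N.mAvoid v h e) (fun a => N.mToLblAvoid v a e) i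

/-- The μ-entry of an edge. -/
def muEntryEdge (N : Net n) (e : ℕ) : MuEntry n :=
  if N.dir e = true then
    let t : Tag := if N.IsHybrid (N.head e) then Tag.hy else Tag.te
    if N.UnresolvedRC (N.tail e) then
      ({(N.muAt e (N.head e), t),
        (fun i => N.muFrom (N.tail e) i - N.muAt e (N.tail e) i, Tag.ie)} : MuEntry n)
    else ({(N.muAt e (N.head e), t)} : MuEntry n)
  else
    ({(N.muAt e (N.head e), Tag.te), (N.muAt e (N.tail e), Tag.te)} : MuEntry n)

/-- One μ-entry per root component (indexed by the minimal representative). -/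
def rootEntries (N : Net n) : MuRep n :=
  ((N.V.filter (fun v => N.IsRootClass v ∧ ∀ w ∈ N.V, N.UndirConn v w → v ≤ w)).val).map
    (fun v => ({(N.muFrom v, Tag.rn)} : MuEntry n))

/-- The edge-based μ-representation of `N`. -/
def muRep (N : Net n) : MuRep n :=
  N.E.val.map (fun e => N.muEntryEdge e) + N.rootEntries

end Net

/-! ## Operations on μ-representations -/

variable {n : ℕ}

/-- Multiplicity of a simple μ-vector in a μ-representation: the number of
entries (with multiplicity) containing it. -/
def multVec (μs : MuRep n) (m : MuVec n) : ℕ :=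
  μs.countP (fun ent => ∃ t, (m, t) ∈ ent)

def hasTagged (μs : MuRep n) (mt : MuVec n × Tag) : Prop := ∃ ent ∈ μs, mt ∈ ent

/-- The entry of a simple μ-vector (meaningful when its multiplicity is 1). -/
def entryOf (μs : MuRep n) (m : MuVec n) : MuEntry n :=
  if h : ∃ ent ∈ μs, ∃ t, (m, t) ∈ ent then h.choose else 0

/-- The tag of a simple μ-vector (meaningful when its multiplicity is 1). -/
def tagOf (μs : MuRep n) (m : MuVec n) : Tag :=
  if hasTagged μs (m, Tag.rn) then Tag.rn
  else if hasTagged μs (m, Tag.ie) then Tag.ie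
  else if hasTagged μs (m, Tag.te) then Tag.te
  else Tag.hy

/-- The tagged μ-vectors other than `m` in the entry of `m`. -/
def invParts (μs : MuRep n) (m : MuVec n) : MuEntry n :=
  (entryOf μs m).filter (fun mt => mt.1 ≠ m)

def hasInv (μs : MuRep n) (m : MuVec n) : Prop := invParts μs m ≠ 0

/-- The inverse `m⁻¹` of `m` (meaningful when it exists). -/
def invVec (μs : MuRep n) (m : MuVec n) : MuVec n := ((invParts μs m).toList.headI).1

/-- `(a,b)` is a tree cherry of the μ-representation. -/
def MuTreeCherry (μs : MuRep n) (a b : Fin n) : Prop :=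
  multVec μs (dlt ({a.succ, b.succ} : Finset (Fin (n + 1)))) = 1

/-- Type of a tree cherry of a μ-representation. -/
def muTreeType (μs : MuRep n) (a b : Fin n) : CT :=
  let mab := dlt ({a.succ, b.succ} : Finset (Fin (n + 1)))
  match tagOf μs mab with
  | Tag.rn => CT.r2
  | Tag.ie => CT.r3
  | Tag.te =>
      if (¬ hasInv μs mab) ∨ (∃ mt ∈ invParts μs mab, mt.2 = Tag.ie) then CT.d else CT.u
  | Tag.hy => CT.u

/-- `(a,b)` is a reticulate cherry of the μ-representation. -/
def MuRetCherry (μs : MuRep n) (a b : Fin n) : Prop :=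
  multVec μs (dlt ({0, a.succ} : Finset (Fin (n + 1)))) = 2 ∧
    (multVec μs (dlt ({0, a.succ, b.succ} : Finset (Fin (n + 1)))) = 1 ∨
      (multVec μs (dlt ({0, a.succ, b.succ} : Finset (Fin (n + 1)))) = 2 ∧
        ∀ ent ∈ μs, ∀ t : Tag,
          (dlt ({0, a.succ, b.succ} : Finset (Fin (n + 1))), t) ∈ ent → t = Tag.ie))

/-- Type of a reticulate cherry of a μ-representation. -/
def muRetType (μs : MuRep n) (a b : Fin n) : CT :=
  let mab := dlt ({0, a.succ, b.succ} : Finset (Fin (n + 1)))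
  if multVec μs mab = 2 then CT.r3
  else
    match tagOf μs mab with
    | Tag.rn => CT.r2
    | Tag.ie => CT.r3
    | Tag.te =>
        if (¬ hasInv μs mab) ∨ (∃ mt ∈ invParts μs mab, mt.2 = Tag.ie) then CT.d else CT.u
    | Tag.hy => CT.u

/-- `δ_{0,a,b}⁻¹`, defined as `δ_{0,a}` in the multiplicity-2 (parallel) case. -/
def retInv (μs : MuRep n) (a b : Fin n) : MuVec n :=
  if multVec μs (dlt ({0, a.succ, b.succ} : Finset (Fin (n + 1)))) = 2 then
    dlt ({0, a.succ} : Finset (Fin (n + 1)))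
  else invVec μs (dlt ({0, a.succ, b.succ} : Finset (Fin (n + 1))))

/-- The internal μ-entry of a reticulate cherry `(a,b)` with respect to `μs`. -/
def internalEntry (μs : MuRep n) (a b : Fin n) : MuEntry n :=
  let d0a := dlt ({0, a.succ} : Finset (Fin (n + 1)))
  let d0ab := dlt ({0, a.succ, b.succ} : Finset (Fin (n + 1)))
  if multVec μs d0ab = 1 ∧
      ((¬ hasInv μs d0ab) ∨ (∃ mt ∈ invParts μs d0ab, mt.2 = Tag.ie)) then
    ({(d0a, Tag.hy)} : MuEntry n)
  else
    ({(d0a, Tag.hy), (fun i => d0ab i + retInv μs a b i - d0a i, Tag.ie)} : MuEntry n)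

/-- Remove the whole entry of `m`. -/
def removeEntryOf (μs : MuRep n) (m : MuVec n) : MuRep n := μs.erase (entryOf μs m)

/-- Remove `m⁻¹` from the entry of `m` (keeping `m`). -/
def removeInvOf (μs : MuRep n) (m : MuVec n) : MuRep n :=
  (μs.erase (entryOf μs m)) + {(entryOf μs m).filter (fun mt => mt.1 = m)}

/-- Remove `m` from its entry (keeping the rest of the entry). -/
def removeVecOf (μs : MuRep n) (m : MuVec n) : MuRep n :=
  (μs.erase (entryOf μs m)) + {(entryOf μs m).filter (fun mt => mt.1 ≠ m)}

def entryOfT (μs : MuRep n) (mt : MuVec n × Tag) : MuEntry n :=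
  if h : ∃ ent ∈ μs, mt ∈ ent then h.choose else 0

/-- Remove one occurrence of the tagged μ-vector `mt` from some entry containing it. -/
def removeTaggedOnce (μs : MuRep n) (mt : MuVec n × Tag) : MuRep n :=
  (μs.erase (entryOfT μs mt)) + {(entryOfT μs mt).erase mt}

/-- Change the tag of `m⁻¹` (within the entry of `m`) to `ie`. -/
def retagInvIe (μs : MuRep n) (m : MuVec n) : MuRep n :=
  let ent := entryOf μs m
  (μs.erase ent) +
    {ent.filter (fun mt => mt.1 = m) + (invParts μs m).map (fun mt => (mt.1, Tag.ie))}

/-- Change the tag of one occurrence of the tagged μ-vector `mt` to `t'`. -/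
def retagTaggedTo (μs : MuRep n) (mt : MuVec n × Tag) (t' : Tag) : MuRep n :=
  let ent := entryOfT μs mt
  (μs.erase ent) + {(ent.erase mt) + ({(mt.1, t')} : MuEntry n)}

/-- Apply `f` to every simple μ-vector of every entry. -/
def mapVecs (f : MuVec n → MuVec n) (μs : MuRep n) : MuRep n :=
  μs.map (fun ent => ent.map (fun mt => (f mt.1, mt.2)))

/-- `(m_0, m_a, m_b, …) ↦ (m_0, 0, m_b, …)`. -/
def zeroCoordA (a : Fin n) (m : MuVec n) : MuVec n :=
  fun i => if i = a.succ then 0 else m i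

/-- `(m_0, m_a, m_b, …) ↦ (m_0 − m_a, m_a − m_b, m_b, …)`. -/
def retAdj (a b : Fin n) (m : MuVec n) : MuVec n :=
  fun i => if i = 0 then m 0 - m a.succ else if i = a.succ then m a.succ - m b.succ else m i

/-- Reduction of a tree cherry `(a,b)` on a μ-representation. -/
def muReduceTree (μs : MuRep n) (a b : Fin n) : MuRep n :=
  let dab := dlt ({a.succ, b.succ} : Finset (Fin (n + 1)))
  let da := dlt ({a.succ} : Finset (Fin (n + 1)))
  let db := dlt ({b.succ} : Finset (Fin (n + 1)))
  let μ1 :=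
    match muTreeType μs a b with
    | CT.r2 => removeEntryOf μs db
    | CT.d => removeEntryOf μs db
    | CT.r3 => removeVecOf (removeInvOf μs db) dab
    | CT.u => retagInvIe (removeEntryOf μs db) dab
  let μ2 := removeEntryOf μ1 da
  mapVecs (zeroCoordA a) μ2

/-- Reduction of a reticulate cherry `(a,b)` on a μ-representation. -/
def muReduceRet (μs : MuRep n) (a b : Fin n) : MuRep n :=
  let d0a := dlt ({0, a.succ} : Finset (Fin (n + 1)))
  let d0ab := dlt ({0, a.succ, b.succ} : Finset (Fin (n + 1)))
  let da := dlt ({a.succ} : Finset (Fin (n + 1)))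
  let db := dlt ({b.succ} : Finset (Fin (n + 1)))
  let intEnt := internalEntry μs a b
  let μ1 :=
    match muRetType μs a b with
    | CT.r2 => removeEntryOf μs db
    | CT.d => removeEntryOf μs db
    | CT.r3 => removeTaggedOnce (removeInvOf μs db) (d0ab, Tag.ie)
    | CT.u => retagInvIe (removeEntryOf μs db) d0ab
  let μ2 := removeEntryOf μ1 da
  let μ3 := μ2.erase intEnt
  let μ4 := retagTaggedTo μ3 (d0a, Tag.hy) Tag.te
  mapVecs (retAdj a b) μ4

/-- Reduction of a cherry `(a,b)` on a μ-representation. -/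
def muReduceCherry (μs : MuRep n) (a b : Fin n) : MuRep n :=
  if MuTreeCherry μs a b then muReduceTree μs a b
  else if MuRetCherry μs a b then muReduceRet μs a b
  else μs

/-! ## Cherries and reductions on networks -/

namespace Net

/-- The node labelled `a` (meaningful when it exists). -/
def labelNode (N : Net n) (a : Fin n) : ℕ :=
  ((N.V.filter (fun x => N.lbl x = some a)).sort (· ≤ ·)).headI

def inEdges (N : Net n) (x : ℕ) : Finset ℕ :=
  N.E.filter (fun e => N.dir e = true ∧ N.head e = x)

/-- The parent of `x` (meaningful when `x` has in-degree 1). -/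
def parentOf (N : Net n) (x : ℕ) : ℕ :=
  N.tail (((N.inEdges x).sort (· ≤ ·)).headI)

def IsParentOf (N : Net n) (p x : ℕ) : Prop :=
  ∃ e ∈ N.E, N.dir e = true ∧ N.tail e = p ∧ N.head e = x

/-- `(a,b)` is a tree cherry of `N`. -/
def TreeCherry (N : Net n) (a b : Fin n) : Prop :=
  ∃ x y p, N.HasLeaf a x ∧ N.HasLeaf b y ∧ x ≠ y ∧ N.IsParentOf p x ∧ N.IsParentOf p y

/-- `(a,b)` is a reticulate cherry of `N`. -/
def RetCherry (N : Net n) (a b : Fin n) : Prop :=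
  ∃ x y pa pb, N.HasLeaf a x ∧ N.HasLeaf b y ∧ x ≠ y ∧
    N.IsParentOf pa x ∧ N.IsHybrid pa ∧ N.IsParentOf pb y ∧ N.IsParentOf pb pa

def IsCherry (N : Net n) (a b : Fin n) : Prop := N.TreeCherry a b ∨ N.RetCherry a b

/-- The type of a cherry `(a,b)`, read off from the parent of `b`. -/
def cherryType (N : Net n) (a b : Fin n) : CT :=
  let pb := N.parentOf (N.labelNode b)
  if N.IsRootNode pb ∧ N.deg pb = 2 then CT.r2
  else if N.IsRootNode pb ∧ N.deg pb = 3 then CT.r3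
  else if 0 < N.undeg pb then CT.u
  else CT.d

def incE (N : Net n) (v : ℕ) : Finset ℕ :=
  N.E.filter (fun e => N.tail e = v ∨ N.head e = v)

/-- A node is suppressible (Def. of node suppression). -/
def Suppressible (N : Net n) (v : ℕ) : Prop :=
  N.lbl v = none ∧
    ((N.deg v = 2 ∧ ¬ N.IsRootNode v) ∨
      (N.deg v = 1 ∧ N.IsRootNode v ∧ ∀ e ∈ N.incE v, ¬ N.IsHybrid (N.head e)))

/-- Replace the two edges `e1`, `e2` at `v` by the single edge (named `e1`)
from `p` to `c`, directed iff `d`. -/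
def replaceEdge (N : Net n) (v e1 e2 p c : ℕ) (d : Bool) : Net n :=
  { V := N.V.erase v
    E := N.E.erase e2
    tail := Function.update N.tail e1 p
    head := Function.update N.head e1 c
    dir := Function.update N.dir e1 d
    lbl := N.lbl }

/-- Suppress a (suppressible) node of degree 1 or 2. -/
def suppress (N : Net n) (v : ℕ) : Net n :=
  match (N.incE v).sort (· ≤ ·) with
  | [e] => { N with V := N.V.erase v, E := N.E.erase e }
  | [e1, e2] =>
      let o1 := if N.tail e1 = v then N.head e1 else N.tail e1
      let o2 := if N.tail e2 = v then N.head e2 else N.tail e2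
      if N.dir e1 = true ∧ N.tail e1 = v then N.replaceEdge v e1 e2 o2 o1 true
      else if N.dir e2 = true ∧ N.tail e2 = v then N.replaceEdge v e1 e2 o1 o2 true
      else if N.dir e1 = true then N.replaceEdge v e1 e2 o1 o2 true
      else if N.dir e2 = true then N.replaceEdge v e1 e2 o2 o1 true
      else N.replaceEdge v e1 e2 o1 o2 false
  | _ => N

def suppressIf (N : Net n) (v : ℕ) : Net n := if N.Suppressible v then N.suppress v else N

/-- Delete the leaf `x` and its incident edge(s). -/
def deleteLeaf (N : Net n) (x : ℕ) : Net n :=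
  { V := N.V.erase x
    E := N.E \ N.incE x
    tail := N.tail
    head := N.head
    dir := N.dir
    lbl := Function.update N.lbl x none }

/-- Reduction of a tree cherry `(a,b)`. -/
def reduceTree (N : Net n) (a b : Fin n) : Net n :=
  let x := N.labelNode a
  let p := N.parentOf x
  (N.deleteLeaf x).suppressIf p

/-- Reduction of a reticulate cherry `(a,b)`: delete the internal hybrid edge,
suppress `p_b` if suppressible, then suppress `p_a`. -/
def reduceRet (N : Net n) (a b : Fin n) : Net n :=
  let x := N.labelNode a
  let y := N.labelNode b
  let pa := N.parentOf x
  let pb := N.parentOf y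
  let eint :=
    ((N.E.filter (fun e => N.dir e = true ∧ N.tail e = pb ∧ N.head e = pa)).sort (· ≤ ·)).headI
  let N1 : Net n := { N with E := N.E.erase eint }
  ((N1.suppressIf pb).suppress pa)

/-- Reduction of the cherry `(a,b)` in `N`, written `N^{(a,b)}`. -/
def reduceCherry (N : Net n) (a b : Fin n) : Net n :=
  if N.TreeCherry a b then N.reduceTree a b
  else if N.RetCherry a b then N.reduceRet a b
  else N

def reduceSeq (N : Net n) (S : List (Fin n × Fin n)) : Net n :=
  S.foldl (fun M s => M.reduceCherry s.1 s.2) N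

def IsRedSeq : Net n → List (Fin n × Fin n) → Prop
  | _, [] => True
  | N, s :: S => N.IsCherry s.1 s.2 ∧ IsRedSeq (N.reduceCherry s.1 s.2) S

/-- `N` is the trivial forest on `L0`: isolated nodes labelled bijectively by `L0`. -/
def IsTrivialForest (N : Net n) (L0 : Finset (Fin n)) : Prop :=
  N.E = ∅ ∧ (∀ v ∈ N.V, ∃ a ∈ L0, N.lbl v = some a) ∧
    (∀ a ∈ L0, ∃ v ∈ N.V, N.lbl v = some a)

/-- `N` is orchard: some cherry reduction sequence reduces it to a trivial forest. -/
def Orchard (N : Net n) : Prop :=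
  ∃ S L0, N.IsRedSeq S ∧ (N.reduceSeq S).IsTrivialForest L0

def freshV (N : Net n) : ℕ := N.V.sup id + 1
def freshE (N : Net n) : ℕ := N.E.sup id + 1

/-- Addition of the cherry `(a,b)` of kind `k` to `N` (identity if conditions fail). -/
def addCherry (N : Net n) (a b : Fin n) (k : CherryKind) : Net n :=
  let y := N.labelNode b
  let w := N.parentOf y
  let ewb := ((N.inEdges y).sort (· ≤ ·)).headI
  let va := N.freshV
  let vpb := N.freshV + 1
  let e1 := N.freshE
  let e2 := N.freshE + 1
  let x := N.labelNode a
  let pa := N.parentOf x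
  let isolated : Prop := y ∈ N.V ∧ N.deg y = 0 ∧ (N.lbl y).isSome
  let nonIsolated : Prop := y ∈ N.V ∧ N.deg y ≠ 0 ∧ (N.lbl y).isSome
  let resolvedRoot : Prop := N.IsRootNode w ∧ N.deg w = 2
  let aLeaf : Prop := ∃ xx, N.HasLeaf a xx
  match k with
  | CherryKind.Tr2 =>
      if isolated then
        { V := insert vpb (insert va N.V)
          E := insert e2 (insert e1 N.E)
          tail := Function.update (Function.update N.tail e1 vpb) e2 vpb
          head := Function.update (Function.update N.head e1 va) e2 y
          dir := Function.update (Function.update N.dir e1 true) e2 true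
          lbl := Function.update N.lbl va (some a) }
      else N
  | CherryKind.Tr3 =>
      if nonIsolated ∧ resolvedRoot then
        { V := insert va N.V
          E := insert e1 N.E
          tail := Function.update N.tail e1 w
          head := Function.update N.head e1 va
          dir := Function.update N.dir e1 true
          lbl := Function.update N.lbl va (some a) }
      else N
  | CherryKind.Td =>
      if nonIsolated ∧ ¬ resolvedRoot then
        { V := insert vpb (insert va N.V)
          E := insert e2 (insert e1 N.E)
          tail := Function.update (Function.update N.tail e1 vpb) e2 vpb
          head :=
            Function.update (Function.update (Function.update N.head ewb vpb) e1 va) e2 y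
          dir := Function.update (Function.update N.dir e1 true) e2 true
          lbl := Function.update N.lbl va (some a) }
      else N
  | CherryKind.Tu =>
      if nonIsolated ∧ ¬ resolvedRoot then
        { V := insert vpb (insert va N.V)
          E := insert e2 (insert e1 N.E)
          tail := Function.update (Function.update N.tail e1 vpb) e2 vpb
          head :=
            Function.update (Function.update (Function.update N.head ewb vpb) e1 va) e2 y
          dir :=
            Function.update (Function.update (Function.update N.dir ewb false) e1 true) e2 true
          lbl := Function.update N.lbl va (some a) }
      else N
  | CherryKind.Rr2 =>
      if aLeaf ∧ isolated then
        { V := insert vpb N.V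
          E := insert e2 (insert e1 N.E)
          tail := Function.update (Function.update N.tail e1 vpb) e2 vpb
          head := Function.update (Function.update N.head e1 pa) e2 y
          dir := Function.update (Function.update N.dir e1 true) e2 true
          lbl := N.lbl }
      else N
  | CherryKind.Rr3 =>
      if aLeaf ∧ nonIsolated ∧ resolvedRoot then
        { V := N.V
          E := insert e1 N.E
          tail := Function.update N.tail e1 w
          head := Function.update N.head e1 pa
          dir := Function.update N.dir e1 true
          lbl := N.lbl }
      else N
  | CherryKind.Rd =>
      if aLeaf ∧ nonIsolated ∧ ¬ resolvedRoot then
        { V := insert vpb N.V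
          E := insert e2 (insert e1 N.E)
          tail := Function.update (Function.update N.tail e1 vpb) e2 vpb
          head :=
            Function.update (Function.update (Function.update N.head ewb vpb) e1 pa) e2 y
          dir := Function.update (Function.update N.dir e1 true) e2 true
          lbl := N.lbl }
      else N
  | CherryKind.Ru =>
      if aLeaf ∧ nonIsolated ∧ ¬ resolvedRoot then
        { V := insert vpb N.V
          E := insert e2 (insert e1 N.E)
          tail := Function.update (Function.update N.tail e1 vpb) e2 vpb
          head :=
            Function.update (Function.update (Function.update N.head ewb vpb) e1 pa) e2 y
          dir :=
            Function.update (Function.update (Function.update N.dir ewb false) e1 true) e2 true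
          lbl := N.lbl }
      else N

/-- Isomorphism of leaf-labelled semidirected networks. -/
def Isom (N M : Net n) : Prop :=
  ∃ f g : ℕ → ℕ,
    Set.InjOn f ↑N.V ∧ N.V.image f = M.V ∧
    Set.InjOn g ↑N.E ∧ N.E.image g = M.E ∧
    (∀ e ∈ N.E, M.dir (g e) = N.dir e) ∧
    (∀ e ∈ N.E, N.dir e = true →
      M.tail (g e) = f (N.tail e) ∧ M.head (g e) = f (N.head e)) ∧
    (∀ e ∈ N.E, N.dir e = false →
      (M.tail (g e) = f (N.tail e) ∧ M.head (g e) = f (N.head e)) ∨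
        (M.tail (g e) = f (N.head e) ∧ M.head (g e) = f (N.tail e))) ∧
    (∀ v ∈ N.V, M.lbl (f v) = N.lbl v)

/-- `N` is a (complete binary) `L`-network. -/
def Good (N : Net n) : Prop := N.IsLNetwork ∧ N.IsBinary ∧ N.IsComplete

/-- The edge-based μ-dissimilarity: size of the symmetric difference of the
multisets of μ-entries. -/
def dmu (N M : Net n) : ℕ := ((N.muRep - M.muRep) + (M.muRep - N.muRep)).card

/-- `(a,b)` is a reticulate cherry of `N` whose internal and external hybrid
edges are parallel. -/
def ParallelRet (N : Net n) (a b : Fin n) : Prop :=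
  ∃ x y pa pb hi he, N.HasLeaf a x ∧ N.HasLeaf b y ∧
    N.IsParentOf pa x ∧ N.IsHybrid pa ∧ N.IsParentOf pb y ∧
    hi ≠ he ∧ hi ∈ N.E ∧ he ∈ N.E ∧ N.dir hi = true ∧ N.dir he = true ∧
    N.tail hi = pb ∧ N.head hi = pa ∧ N.tail he = pb ∧ N.head he = pa

end Net


/-! ### Auxiliary lemmas for Statement 4 -/

namespace Net

variable {n : ℕ} {N : Net n}

lemma chain_nil_iff {u x : ℕ} : N.chain u [] x ↔ u = x := Iff.rfl

lemma chain_cons_iff {u x : ℕ} {s : ℕ × Bool} {p : List (ℕ × Bool)} :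
    N.chain u (s :: p) x ↔ N.stepOK u s ∧ N.chain (N.dst s) p x := Iff.rfl

lemma chain_append_iff {l1 l2 : List (ℕ × Bool)} :
    ∀ {u x : ℕ}, N.chain u (l1 ++ l2) x ↔ ∃ w, N.chain u l1 w ∧ N.chain w l2 x := by
  induction l1 with
  | nil =>
    intro u x
    constructor
    · intro h; exact ⟨u, rfl, h⟩
    · rintro ⟨w, hw, h⟩
      have huw : u = w := hw
      rw [List.nil_append]; rw [huw]; exact h
  | cons s l ih =>
    intro u x
    simp only [List.cons_append, chain_cons_iff, ih]
    constructor
    · rintro ⟨h1, w, h2, h3⟩; exact ⟨w, ⟨h1, h2⟩, h3⟩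
    · rintro ⟨w, ⟨h1, h2⟩, h3⟩; exact ⟨h1, w, h2, h3⟩

lemma chain_fst_mem {p : List (ℕ × Bool)} :
    ∀ {u x : ℕ}, N.chain u p x → ∀ s ∈ p, s.1 ∈ N.E := by
  induction p with
  | nil => intro u x _ s hs; simp at hs
  | cons t p ih =>
    rintro u x ⟨h1, h2⟩ s hs
    rcases List.mem_cons.1 hs with rfl | hs
    · exact h1.1
    · exact ih h2 s hs

lemma src_mem_chain {p : List (ℕ × Bool)} :
    ∀ {u x : ℕ}, N.chain u p x → ∀ t ∈ p, N.src t = u ∨ N.src t ∈ p.map N.dst := by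
  induction p with
  | nil => intro u x _ t ht; simp at ht
  | cons s p ih =>
    rintro u x ⟨h1, h2⟩ t ht
    rcases List.mem_cons.1 ht with rfl | ht
    · exact Or.inl h1.2.2
    · rcases ih h2 t ht with h | h
      · exact Or.inr (by simp [h])
      · exact Or.inr (by simp only [List.map_cons, List.mem_cons]; exact Or.inr h)

lemma src_flip (N : Net n) (f : ℕ) (b : Bool) : N.src (f, !b) = N.dst (f, b) := by
  cases b <;> simp [src, dst]

/-- Two traversals of the same edge have matching or swapped endpoints. -/
lemma step_endpoints {s t : ℕ × Bool} (h : t.1 = s.1) :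
    (N.src t = N.src s ∧ N.dst t = N.dst s) ∨ (N.src t = N.dst s ∧ N.dst t = N.src s) := by
  obtain ⟨f, b⟩ := t
  obtain ⟨g, c⟩ := s
  simp only at h
  subst h
  cases b <;> cases c <;> simp [src, dst]

lemma dst_ne_of_stepOK (hac : N.Acyclic) {u : ℕ} {s : ℕ × Bool} (h : N.stepOK u s) :
    N.dst s ≠ u := by
  intro hd
  exact hac [s] ⟨u, by simp, ⟨h, hd⟩, by simp, by simp⟩

/-- A vertex-simple semidirected walk repeats no edges. -/
lemma edges_nodup {p : List (ℕ × Bool)} :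
    ∀ {u x : ℕ}, N.chain u p x → (u :: p.map N.dst).Nodup → (p.map Prod.fst).Nodup := by
  induction p with
  | nil => intros; simp
  | cons s p ih =>
    rintro u x ⟨hstep, hch⟩ hnd
    have hnd' : (N.dst s :: p.map N.dst).Nodup := by
      have := (List.nodup_cons.1 hnd).2
      simpa using this
    simp only [List.map_cons, List.nodup_cons]
    refine ⟨?_, ih hch hnd'⟩
    intro hmem
    obtain ⟨t, ht, hts⟩ := List.mem_map.1 hmem
    have h2 := step_endpoints (N := N) hts
    have hdt : N.dst t ∈ p.map N.dst := List.mem_map_of_mem ht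
    have hu : N.src s = u := hstep.2.2
    rcases h2 with ⟨-, h⟩ | ⟨-, h⟩
    · rw [h] at hdt
      exact (List.nodup_cons.1 hnd').1 hdt
    · rw [h, hu] at hdt
      have : u ∈ (s :: p).map N.dst := by
        simp only [List.map_cons, List.mem_cons]; exact Or.inr hdt
      exact (List.nodup_cons.1 hnd).1 this

/-- In an acyclic network, a simple walk from the far end of a step that avoids
the step's edge never revisits the step's source. -/
lemma no_revisit (hac : N.Acyclic) {u x : ℕ} {s : ℕ × Bool} {q : List (ℕ × Bool)}
    (hstep : N.stepOK u s) (hch : N.chain (N.dst s) q x)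
    (hnd : (N.dst s :: q.map N.dst).Nodup) (hav : s.1 ∉ q.map Prod.fst) :
    u ∉ N.dst s :: q.map N.dst := by
  intro hmem
  rcases List.mem_cons.1 hmem with h | h
  · exact dst_ne_of_stepOK hac hstep h.symm
  obtain ⟨t, ht, hdt⟩ := List.mem_map.1 h
  obtain ⟨q1, q2, rfl⟩ := List.append_of_mem ht
  obtain ⟨w, hw1, hw2⟩ := chain_append_iff.1 hch
  obtain ⟨hw2a, hw2b⟩ := chain_cons_iff.1 hw2
  have hq1t : N.chain (N.dst s) (q1 ++ [t]) u :=
    chain_append_iff.2 ⟨w, hw1, ⟨hw2a, hdt⟩⟩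
  have hsub : List.Sublist (N.dst s :: ((q1 ++ [t]).map N.dst))
      (N.dst s :: ((q1 ++ t :: q2).map N.dst)) := by
    simp only [List.map_append, List.map_cons, List.map_nil]
    exact ((List.cons_sublist_cons.2 (List.nil_sublist _)).append_left _).cons₂ _
  have hvnd : (N.dst s :: ((q1 ++ [t]).map N.dst)).Nodup := hsub.nodup hnd
  have hednd : ((q1 ++ [t]).map Prod.fst).Nodup := edges_nodup hq1t hvnd
  refine hac (s :: (q1 ++ [t])) ⟨u, by simp, ⟨hstep, hq1t⟩, ?_, ?_⟩
  · simpa using hvnd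
  · simp only [List.map_cons, List.nodup_cons]
    refine ⟨?_, hednd⟩
    intro hm
    apply hav
    have hsub2 : List.Sublist ((q1 ++ [t]).map Prod.fst) ((q1 ++ t :: q2).map Prod.fst) := by
      simp only [List.map_append, List.map_cons, List.map_nil]
      exact (List.cons_sublist_cons.2 (List.nil_sublist _)).append_left _
    exact hsub2.subset hm

/-- Lists of bounded length with entries in a finite set form a finite set. -/
lemma finite_lists {α : Type*} {s : Set α} (hs : s.Finite) :
    ∀ K : ℕ, {l : List α | l.length ≤ K ∧ ∀ a ∈ l, a ∈ s}.Finite := by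
  intro K
  induction K with
  | zero =>
    apply Set.Finite.subset (Set.finite_singleton ([] : List α))
    rintro l ⟨hl, -⟩
    simp [List.length_eq_zero_iff.1 (Nat.le_zero.1 hl)]
  | succ K ih =>
    apply Set.Finite.subset ((Set.finite_singleton ([] : List α)).union
      ((hs.prod ih).image (fun al => al.1 :: al.2)))
    rintro l ⟨hl, hmem⟩
    cases l with
    | nil => exact Or.inl rfl
    | cons a l =>
      refine Or.inr ⟨(a, l), ⟨hmem a (by simp), ?_, fun b hb => hmem b (by simp [hb])⟩, rfl⟩
      exact Nat.succ_le_succ_iff.1 (by simpa using hl)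

lemma paths_finite (N : Net n) (u x : ℕ) : (N.paths u x).Finite := by
  classical
  set S : Finset ℕ := N.E.image N.tail ∪ N.E.image N.head with hS
  apply Set.Finite.subset
    (finite_lists (N.E.finite_toSet.prod (Set.finite_univ (α := Bool))) S.card)
  rintro p ⟨hu, hch, hnd⟩
  constructor
  · have h1 : (p.map N.dst).Nodup := (List.nodup_cons.1 hnd).2
    have h2 : (p.map N.dst).toFinset ⊆ S := by
      intro y hy
      simp only [List.mem_toFinset, List.mem_map] at hy
      obtain ⟨t, ht, rfl⟩ := hy
      have hte := chain_fst_mem hch t ht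
      rw [hS, Finset.mem_union]
      cases hb : t.2
      · exact Or.inl (Finset.mem_image.2 ⟨t.1, hte, by simp [dst, hb]⟩)
      · exact Or.inr (Finset.mem_image.2 ⟨t.1, hte, by simp [dst, hb]⟩)
    calc p.length = (p.map N.dst).length := (List.length_map _).symm
      _ = (p.map N.dst).toFinset.card := (List.toFinset_card_of_nodup h1).symm
      _ ≤ S.card := Finset.card_le_card h2
  · intro a ha
    exact Set.mem_prod.2 ⟨chain_fst_mem hch a ha, Set.mem_univ _⟩

/-- Key splitting lemma: paths from `u` to `x` either avoid the edge of a legal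
step `s` out of `u`, or consist of `s` followed by a path from `dst s` avoiding it. -/
lemma m_split' (hac : N.Acyclic) {u : ℕ} {s : ℕ × Bool}
    (hu : u ∈ N.V) (hv : N.dst s ∈ N.V) (hs : N.stepOK u s) (x : ℕ) :
    N.m u x = N.mAvoid u x s.1 + N.mAvoid (N.dst s) x s.1 := by
  classical
  have hfin := paths_finite N u x
  have himg : {p | p ∈ N.paths u x ∧ s.1 ∈ p.map Prod.fst}
      = (fun q => s :: q) '' N.pathsAvoid (N.dst s) x s.1 := by
    ext p
    constructor
    · rintro ⟨⟨hpu, hch, hnd⟩, hmem⟩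
      cases p with
      | nil => simp at hmem
      | cons t q =>
        obtain ⟨hst, hch'⟩ := chain_cons_iff.1 hch
        have hnotin : u ∉ (t :: q).map N.dst := (List.nodup_cons.1 hnd).1
        have hts : t = s := by
          by_contra hne
          rcases eq_or_ne t.1 s.1 with hfeq | hfne
          · -- same edge, so opposite orientation, so src t = dst s = u : self-loop
            have hb : t.2 = s.2 ∨ t.2 = !s.2 := by
              cases ht2 : t.2 <;> cases hs2 : s.2 <;> simp
            rcases hb with hb | hb
            · exact hne (Prod.ext hfeq hb)
            · have hts2 : t = (s.1, !s.2) := Prod.ext hfeq hb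
              have h1 : N.src t = N.dst s := by
                rw [hts2, src_flip]
              have h2 : N.src t = u := hst.2.2
              exact dst_ne_of_stepOK hac hs (h1 ▸ h2 ▸ rfl)
          · -- the edge of `s` is used later in the walk: contradiction
            have hmem' : s.1 ∈ q.map Prod.fst := by
              rw [List.map_cons] at hmem
              rcases List.mem_cons.1 hmem with h | h
              · exact absurd h.symm hfne
              · exact h
            obtain ⟨t', ht', hts'⟩ := List.mem_map.1 hmem'
            have husrc : N.src s = u := hs.2.2
            have hdmem : N.dst t' ∈ q.map N.dst := List.mem_map_of_mem ht'
            rcases step_endpoints (N := N) hts' with ⟨h1, h2⟩ | ⟨h1, h2⟩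
            · -- src t' = src s = u; src t' occurs as a vertex of the walk
              rcases src_mem_chain hch' t' ht' with h | h
              · -- src t' = dst t
                apply hnotin
                simp only [List.map_cons, List.mem_cons]
                exact Or.inl (by rw [← husrc, ← h1, h])
              · apply hnotin
                simp only [List.map_cons, List.mem_cons]
                rw [h1, husrc] at h
                exact Or.inr h
            · -- dst t' = src s = u
              apply hnotin
              rw [h2, husrc] at hdmem
              simp only [List.map_cons, List.mem_cons]
              exact Or.inr hdmem
        subst hts
        refine ⟨q, ⟨⟨hv, hch', ?_⟩, ?_⟩, rfl⟩
        · have := (List.nodup_cons.1 hnd).2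
          simpa using this
        · -- q avoids s.1
          intro hmq
          obtain ⟨t', ht', hts'⟩ := List.mem_map.1 hmq
          have hdmem : N.dst t' ∈ q.map N.dst := List.mem_map_of_mem ht'
          have husrc : N.src t = u := hst.2.2
          rcases step_endpoints (N := N) hts' with ⟨-, h2⟩ | ⟨-, h2⟩
          · -- dst t' = dst t, repeated vertex
            have hnd2 : (N.dst t :: q.map N.dst).Nodup := by
              have := (List.nodup_cons.1 hnd).2
              simpa using this
            rw [h2] at hdmem
            exact (List.nodup_cons.1 hnd2).1 hdmem
          · rw [h2, husrc] at hdmem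
            exact hnotin (by simp only [List.map_cons, List.mem_cons]; exact Or.inr hdmem)
    · rintro ⟨q, ⟨⟨hqv, hqch, hqnd⟩, hqav⟩, rfl⟩
      refine ⟨⟨hu, ⟨hs, hqch⟩, ?_⟩, by simp⟩
      rw [List.nodup_cons]
      constructor
      · have := no_revisit hac hs hqch hqnd hqav
        simpa using this
      · simpa using hqnd
  have hsplit : N.paths u x =
      N.pathsAvoid u x s.1 ∪ {p | p ∈ N.paths u x ∧ s.1 ∈ p.map Prod.fst} := by
    ext p
    constructor
    · intro hp
      by_cases hmem : s.1 ∈ p.map Prod.fst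
      · exact Or.inr ⟨hp, hmem⟩
      · exact Or.inl ⟨hp, hmem⟩
    · rintro (⟨hp, -⟩ | ⟨hp, -⟩) <;> exact hp
  have hdisj : Disjoint (N.pathsAvoid u x s.1)
      {p | p ∈ N.paths u x ∧ s.1 ∈ p.map Prod.fst} := by
    rw [Set.disjoint_left]
    rintro p ⟨-, hav⟩ ⟨-, hmem⟩
    exact hav hmem
  have hBfin : {p | p ∈ N.paths u x ∧ s.1 ∈ p.map Prod.fst}.Finite :=
    hfin.subset (fun p hp => hp.1)
  have hAfin : (N.pathsAvoid u x s.1).Finite := hfin.subset (fun p hp => hp.1)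
  rw [m, hsplit, Set.ncard_union_eq hdisj hAfin hBfin, himg,
    Set.ncard_image_of_injective _ List.cons_injective]
  rfl

lemma m_split (hac : N.Acyclic) {u e : ℕ} {b : Bool}
    (hu : u ∈ N.V) (hv : N.dst (e, b) ∈ N.V) (hs : N.stepOK u (e, b)) (x : ℕ) :
    N.m u x = N.mAvoid u x e + N.mAvoid (N.dst (e, b)) x e :=
  m_split' hac hu hv hs x

lemma m_eq_of_ustep (hN : N.IsLNetwork) {u w : ℕ} (h : N.ustep u w) (x : ℕ) :
    N.m u x = N.m w x := by
  obtain ⟨e, he, hdir, hends⟩ := h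
  have hac := hN.acyclic
  have hdir' : ∀ c : Bool, N.dir e = true → c = true := fun c hd => by
    rw [hdir] at hd; cases hd
  rcases hends with ⟨h1, h2⟩ | ⟨h1, h2⟩
  · have hu : u ∈ N.V := h1 ▸ hN.wfT e he
    have hw : w ∈ N.V := h2 ▸ hN.wfH e he
    have hs1 : N.stepOK u (e, true) := ⟨he, hdir' true, h1⟩
    have hs2 : N.stepOK w (e, false) := ⟨he, hdir' false, h2⟩
    have hd1 : N.dst (e, true) = w := h2
    have hd2 : N.dst (e, false) = u := h1
    have E1 := m_split hac hu (hd1 ▸ hw) hs1 x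
    have E2 := m_split hac hw (hd2 ▸ hu) hs2 x
    rw [hd1] at E1
    rw [hd2] at E2
    rw [E1, E2, Nat.add_comm]
  · have hu : u ∈ N.V := h2 ▸ hN.wfH e he
    have hw : w ∈ N.V := h1 ▸ hN.wfT e he
    have hs1 : N.stepOK u (e, false) := ⟨he, hdir' false, h2⟩
    have hs2 : N.stepOK w (e, true) := ⟨he, hdir' true, h1⟩
    have hd1 : N.dst (e, false) = w := h1
    have hd2 : N.dst (e, true) = u := h2
    have E1 := m_split hac hu (hd1 ▸ hw) hs1 x
    have E2 := m_split hac hw (hd2 ▸ hu) hs2 x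
    rw [hd1] at E1
    rw [hd2] at E2
    rw [E1, E2, Nat.add_comm]

lemma m_eq_of_undirConn (hN : N.IsLNetwork) {u v : ℕ} (h : N.UndirConn u v) (x : ℕ) :
    N.m u x = N.m v x := by
  induction h with
  | refl => rfl
  | tail _ hw ih => rw [ih, m_eq_of_ustep hN hw x]

end Net

/-- Lemma 2: for a root component `T` (of `v0`) with admissible
edges, the vector `i ↦ m(v,i;e) + m(u,i;e)` (for `e = uv ∈ adm(T)` with `u ∈ T`)
does not depend on the choice of admissible edge `e`. -/
theorem stmt4 {n : ℕ} (N : Net n) (hN : N.IsLNetwork) (v0 : ℕ)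
    (hroot : N.IsRootClass v0) (e1 e2 : ℕ)
    (h1 : N.AdmFor v0 e1) (h2 : N.AdmFor v0 e2) :
    ∀ i : Fin n,
      N.mToLblAvoid (N.head e1) i e1 + N.mToLblAvoid (N.tail e1) i e1 =
        N.mToLblAvoid (N.head e2) i e2 + N.mToLblAvoid (N.tail e2) i e2 := by
  intro i
  have key : ∀ e : ℕ, N.AdmFor v0 e →
      N.mToLblAvoid (N.head e) i e + N.mToLblAvoid (N.tail e) i e = N.mToLbl v0 i := by
    rintro e ⟨he, hconn⟩
    unfold Net.mToLblAvoid Net.mToLbl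
    rw [← Finset.sum_add_distrib]
    refine Finset.sum_congr rfl fun x hx => ?_
    have hs : N.stepOK (N.tail e) (e, true) := ⟨he, fun _ => rfl, rfl⟩
    have hu : N.tail e ∈ N.V := hN.wfT e he
    have hveq : N.dst (e, true) = N.head e := rfl
    have hv : N.dst (e, true) ∈ N.V := hN.wfH e he
    have E := Net.m_split hN.acyclic hu hv hs x
    rw [hveq] at E
    have T := Net.m_eq_of_undirConn hN hconn x
    omega
  rw [key e1 h1, key e2 h2]

end
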